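/- Let Λ be a k-graph with topological realization X_Λ. Then X_Λ = ⋃_{m ≤ 1_k} ⋃_{λ ∈ Λ^m} Q_λ, the sets Q_λ for distinct λ ∈ ⋃_{m ≤ 1_k} Λ^m are pairwise disjoint, and for each m ≤ 1_k and λ ∈ Λ^m the map [λ,t] ↦ t is a homeomorphism of Q_λ onto the relatively open cube (0,m) ⊆ ℝ^k; in particular Q_λ is homeomorphic to the open unit cube in ℝ^{|m|}, where |m| = Σ_i m_i. -/

import Mathlib

/-- A `k`-graph: a countable small category (objects identified with the
identity morphisms, i.e. the morphisms of degree `0`) equipped with a degree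
functor `d : Λ → ℕᵏ` satisfying the unique factorization property. -/
structure KGraph (k : ℕ) where
  /-- The morphisms of the category. -/
  Mor : Type
  /-- The category is countable. -/
  countable : Countable Mor
  /-- The source (domain) of a morphism, viewed as a degree-zero morphism. -/
  src : Mor → Mor
  /-- The range (codomain) of a morphism, viewed as a degree-zero morphism. -/
  rng : Mor → Mor
  /-- Composition `comp a b = a ∘ b`, meaningful when `src a = rng b`. -/
  comp : Mor → Mor → Mor
  /-- The degree functor. -/
  deg : Mor → Fin k → ℕ
  src_src : ∀ a, src (src a) = src a
  rng_src : ∀ a, rng (src a) = src a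
  src_rng : ∀ a, src (rng a) = rng a
  rng_rng : ∀ a, rng (rng a) = rng a
  deg_src : ∀ a, deg (src a) = 0
  deg_rng : ∀ a, deg (rng a) = 0
  src_comp : ∀ a b, src a = rng b → src (comp a b) = src b
  rng_comp : ∀ a b, src a = rng b → rng (comp a b) = rng a
  comp_assoc : ∀ a b c, src a = rng b → src b = rng c →
    comp (comp a b) c = comp a (comp b c)
  id_comp : ∀ a, comp (rng a) a = a
  comp_id : ∀ a, comp a (src a) = a
  deg_comp : ∀ a b, src a = rng b → deg (comp a b) = deg a + deg b
  /-- The unique factorization property. -/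
  factor : ∀ (a : Mor) (m n : Fin k → ℕ), deg a = m + n →
    ∃! p : Mor × Mor, deg p.1 = m ∧ deg p.2 = n ∧ src p.1 = rng p.2 ∧
      comp p.1 p.2 = a

namespace KGraph

variable {k : ℕ} (Λ : KGraph k)

/-- The segment `a(m,n)` of a morphism `a`, i.e. the (unique) middle factor of
`a = a(0,m) a(m,n) a(n, d(a))`; junk value `a` if no such factorization exists. -/
noncomputable def seg (a : Λ.Mor) (m n : Fin k → ℕ) : Λ.Mor :=
  letI := Classical.propDecidable
  if h : ∃ b : Λ.Mor, Λ.deg b = n - m ∧ ∃ x y : Λ.Mor,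
      Λ.deg x = m ∧ Λ.src x = Λ.rng b ∧ Λ.src b = Λ.rng y ∧
      a = Λ.comp x (Λ.comp b y)
  then h.choose else a

/-- The points `⨆_{λ ∈ Λ} {λ} × [0, d(λ)]` of which the topological
realization is a quotient; topologized as a disjoint union of subspaces of `ℝᵏ`. -/
def Points : Type :=
  Σ a : Λ.Mor, { t : Fin k → ℝ // ∀ i, 0 ≤ t i ∧ t i ≤ (Λ.deg a i : ℝ) }

instance : TopologicalSpace Λ.Points :=
  inferInstanceAs (TopologicalSpace
    (Σ a : Λ.Mor, { t : Fin k → ℝ // ∀ i, 0 ≤ t i ∧ t i ≤ (Λ.deg a i : ℝ) }))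

/-- Coordinatewise floor `⌊t⌋` (as a vector of naturals; this is the honest
floor on the relevant region `t ≥ 0`). -/
noncomputable def fl (t : Fin k → ℝ) : Fin k → ℕ := fun i => (⌊t i⌋).toNat

/-- Coordinatewise ceiling `⌈t⌉`. -/
noncomputable def ce (t : Fin k → ℝ) : Fin k → ℕ := fun i => (⌈t i⌉).toNat

/-- The fractional part `t - ⌊t⌋`. -/
noncomputable def frac (t : Fin k → ℝ) : Fin k → ℝ := fun i => t i - ((⌊t i⌋).toNat : ℝ)

/-- The relation `(μ,s) ∼ (ν,t) ⟺ μ(⌊s⌋,⌈s⌉) = ν(⌊t⌋,⌈t⌉)` and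
`s - ⌊s⌋ = t - ⌊t⌋` defining the topological realization. -/
def ptRel : Λ.Points → Λ.Points → Prop := fun p q =>
  Λ.seg p.1 (fl p.2.1) (ce p.2.1) = Λ.seg q.1 (fl q.2.1) (ce q.2.1) ∧
    frac p.2.1 = frac q.2.1

/-- `ptRel` is an equivalence relation. -/
def ptSetoid : Setoid Λ.Points where
  r := Λ.ptRel
  iseqv := ⟨fun _ => ⟨rfl, rfl⟩, fun h => ⟨h.1.symm, h.2.symm⟩,
    fun h h' => ⟨h.1.trans h'.1, h.2.trans h'.2⟩⟩

/-- The topological realization `X_Λ` of the `k`-graph `Λ`. -/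
def Real : Type := Quotient Λ.ptSetoid

instance : TopologicalSpace Λ.Real :=
  inferInstanceAs (TopologicalSpace (Quotient Λ.ptSetoid))

/-- The class `[λ, t] ∈ X_Λ` of a pair `(λ, t)` with `0 ≤ t ≤ d(λ)`. -/
def pt (a : Λ.Mor) (t : Fin k → ℝ) (h : ∀ i, 0 ≤ t i ∧ t i ≤ (Λ.deg a i : ℝ)) :
    Λ.Real :=
  Quotient.mk Λ.ptSetoid ⟨a, ⟨t, h⟩⟩

/-- The open cube `Q_λ = {[λ,t] : t ∈ (0, d(λ))}` of a morphism `λ` (of degree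
`≤ (1,…,1)`). -/
def Qcube (lam : Λ.Mor) : Set Λ.Real :=
  { x | ∃ (t : Fin k → ℝ) (h : ∀ i, 0 ≤ t i ∧ t i ≤ (Λ.deg lam i : ℝ)),
      (∀ i, Λ.deg lam i = 1 → 0 < t i ∧ t i < 1) ∧ x = Λ.pt lam t h }

/-- The `r`-skeleton `X_Λ^r` of the topological realization. -/
def skel' (G : KGraph k) : ℕ → Set G.Real
  | 0 => ⋃ v ∈ { v : G.Mor | G.deg v = 0 }, G.Qcube v
  | (r+1) => skel' G r ∪
      ⋃ lam ∈ { lam : G.Mor | G.deg lam ≤ 1 ∧ ∑ i, G.deg lam i = r + 1 },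
        G.Qcube lam

/-- The `r`-skeleton (wrapper). -/
def skel (r : ℕ) : Set Λ.Real := skel' Λ r

/-- A `k`-graph is connected if any two vertices are joined by an undirected
path of morphisms. -/
def Connected : Prop :=
  ∀ u v : Λ.Mor, Λ.deg u = 0 → Λ.deg v = 0 →
    Relation.ReflTransGen (fun x y => ∃ e : Λ.Mor,
      (Λ.src e = x ∧ Λ.rng e = y) ∨ (Λ.src e = y ∧ Λ.rng e = x)) u v

end KGraph

/-- A morphism of `k`-graphs: a degree-preserving functor. -/
@[ext]
structure KGraphHom {k : ℕ} (Λ Γ : KGraph k) where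
  toFun : Λ.Mor → Γ.Mor
  map_src : ∀ a, toFun (Λ.src a) = Γ.src (toFun a)
  map_rng : ∀ a, toFun (Λ.rng a) = Γ.rng (toFun a)
  map_comp : ∀ a b, Λ.src a = Λ.rng b →
    toFun (Λ.comp a b) = Γ.comp (toFun a) (toFun b)
  map_deg : ∀ a, Γ.deg (toFun a) = Λ.deg a

namespace KGraphHom

variable {k : ℕ} {Λ Γ Θ : KGraph k}

/-- The identity `k`-graph morphism. -/
def id (Λ : KGraph k) : KGraphHom Λ Λ :=
  ⟨fun a => a, fun _ => rfl, fun _ => rfl, fun _ _ _ => rfl, fun _ => rfl⟩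

/-- Composition of `k`-graph morphisms. -/
def comp (ψ : KGraphHom Γ Θ) (φ : KGraphHom Λ Γ) : KGraphHom Λ Θ where
  toFun := ψ.toFun ∘ φ.toFun
  map_src a := by simp [Function.comp, φ.map_src, ψ.map_src]
  map_rng a := by simp [Function.comp, φ.map_rng, ψ.map_rng]
  map_comp a b h := by
    simp only [Function.comp]
    rw [φ.map_comp a b h, ψ.map_comp _ _ (by rw [← φ.map_src, ← φ.map_rng, h])]
  map_deg a := by simp [Function.comp, φ.map_deg, ψ.map_deg]

/-- The induced map on points `(λ, t) ↦ (φ(λ), t)`. -/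
def pointMap (φ : KGraphHom Λ Γ) : Λ.Points → Γ.Points :=
  fun p => ⟨φ.toFun p.1, ⟨p.2.1, fun i => by rw [φ.map_deg]; exact p.2.2 i⟩⟩

/-- The induced map `φ̃ : X_Λ → X_Γ` on topological realizations,
`φ̃([λ,t]) = [φ(λ), t]` (defined via choice of representatives). -/
noncomputable def real (φ : KGraphHom Λ Γ) : Λ.Real → Γ.Real :=
  fun x => Quotient.mk Γ.ptSetoid (φ.pointMap (Quotient.out x))

end KGraphHom

/-- A covering of `k`-graphs: a surjective degree-preserving functor
`p : Ω → Λ` mapping `Ωv` bijectively onto `Λp(v)` and `vΩ` bijectively onto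
`p(v)Λ` for every vertex `v` of `Ω`. -/
def KGraphHom.IsCovering {k : ℕ} {Ω Λ : KGraph k} (p : KGraphHom Ω Λ) : Prop :=
  Function.Surjective p.toFun ∧
    ∀ v : Ω.Mor, Ω.deg v = 0 →
      Set.BijOn p.toFun { a | Ω.src a = v } { b | Λ.src b = p.toFun v } ∧
      Set.BijOn p.toFun { a | Ω.rng a = v } { b | Λ.rng b = p.toFun v }

section Helpers
namespace KGraph
variable {k : ℕ} (Λ : KGraph k)

lemma seg_spec (a b x y : Λ.Mor) (m n : Fin k → ℕ)
    (hb : Λ.deg b = n - m) (hx : Λ.deg x = m) (h1 : Λ.src x = Λ.rng b)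
    (h2 : Λ.src b = Λ.rng y) (ha : a = Λ.comp x (Λ.comp b y)) :
    Λ.seg a m n = b := by
  have hex : ∃ b' : Λ.Mor, Λ.deg b' = n - m ∧ ∃ x' y' : Λ.Mor,
      Λ.deg x' = m ∧ Λ.src x' = Λ.rng b' ∧ Λ.src b' = Λ.rng y' ∧
      a = Λ.comp x' (Λ.comp b' y') := ⟨b, hb, x, y, hx, h1, h2, ha⟩
  rw [seg, dif_pos hex]
  obtain ⟨hb', x', y', hx', h1', h2', ha'⟩ := hex.choose_spec
  set b' := hex.choose
  -- sources match for outer compositions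
  have hr : Λ.rng (Λ.comp b y) = Λ.rng b := Λ.rng_comp b y h2
  have hr' : Λ.rng (Λ.comp b' y') = Λ.rng b' := Λ.rng_comp b' y' h2'
  have hs : Λ.src x = Λ.rng (Λ.comp b y) := by rw [hr]; exact h1
  have hs' : Λ.src x' = Λ.rng (Λ.comp b' y') := by rw [hr']; exact h1'
  have hdeg : Λ.deg a = m + (Λ.deg b + Λ.deg y) := by
    rw [ha, Λ.deg_comp x _ hs, Λ.deg_comp b y h2, hx]
  have hdeg' : Λ.deg a = m + (Λ.deg b' + Λ.deg y') := by
    rw [ha', Λ.deg_comp x' _ hs', Λ.deg_comp b' y' h2', hx']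
  have hu : Λ.deg b + Λ.deg y = Λ.deg b' + Λ.deg y' := by
    have := hdeg.symm.trans hdeg'
    exact add_left_cancel this
  have hfac := Λ.factor a m (Λ.deg b + Λ.deg y) hdeg
  have hp1 : (Λ.deg (x, Λ.comp b y).1 = m ∧ Λ.deg (x, Λ.comp b y).2 = Λ.deg b + Λ.deg y ∧
      Λ.src (x, Λ.comp b y).1 = Λ.rng (x, Λ.comp b y).2 ∧
      Λ.comp (x, Λ.comp b y).1 (x, Λ.comp b y).2 = a) :=
    ⟨hx, Λ.deg_comp b y h2, hs, ha.symm⟩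
  have hp2 : (Λ.deg (x', Λ.comp b' y').1 = m ∧ Λ.deg (x', Λ.comp b' y').2 = Λ.deg b + Λ.deg y ∧
      Λ.src (x', Λ.comp b' y').1 = Λ.rng (x', Λ.comp b' y').2 ∧
      Λ.comp (x', Λ.comp b' y').1 (x', Λ.comp b' y').2 = a) :=
    ⟨hx', by rw [Λ.deg_comp b' y' h2', hu], hs', ha'.symm⟩
  have heq := (hfac.unique hp1 hp2)
  have hc : Λ.comp b y = Λ.comp b' y' := congrArg Prod.snd heq
  have hdb : Λ.deg b = Λ.deg b' := hb.trans hb'.symm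
  have hy : Λ.deg y = Λ.deg y' := by
    have := hu; rw [hdb] at this; exact add_left_cancel this
  have hfac2 := Λ.factor (Λ.comp b y) (Λ.deg b) (Λ.deg y) (Λ.deg_comp b y h2)
  have hq1 : (Λ.deg (b, y).1 = Λ.deg b ∧ Λ.deg (b, y).2 = Λ.deg y ∧
      Λ.src (b, y).1 = Λ.rng (b, y).2 ∧ Λ.comp (b, y).1 (b, y).2 = Λ.comp b y) :=
    ⟨rfl, rfl, h2, rfl⟩
  have hq2 : (Λ.deg (b', y').1 = Λ.deg b ∧ Λ.deg (b', y').2 = Λ.deg y ∧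
      Λ.src (b', y').1 = Λ.rng (b', y').2 ∧ Λ.comp (b', y').1 (b', y').2 = Λ.comp b y) :=
    ⟨hdb.symm, hy.symm, h2', (hc.symm ▸ rfl)⟩
  have := hfac2.unique hq2 hq1
  exact congrArg Prod.fst this

lemma seg_self (b : Λ.Mor) : Λ.seg b 0 (Λ.deg b) = b := by
  refine Λ.seg_spec b b (Λ.rng b) (Λ.src b) 0 (Λ.deg b) ?_ (Λ.deg_rng b)
    (Λ.src_rng b) (Λ.rng_src b).symm ?_
  · funext i; simp
  · rw [Λ.comp_id b, Λ.id_comp b]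

lemma coord_facts (r : ℝ) (h0 : 0 ≤ r) :
    (⌊r⌋).toNat ≤ (⌈r⌉).toNat ∧ (⌈r⌉).toNat ≤ (⌊r⌋).toNat + 1 ∧
    0 ≤ r - ((⌊r⌋).toNat : ℝ) ∧ r - ((⌊r⌋).toNat : ℝ) < 1 ∧
    ((⌈r⌉).toNat = (⌊r⌋).toNat → r - ((⌊r⌋).toNat : ℝ) = 0) ∧
    ((⌊r⌋).toNat < (⌈r⌉).toNat → 0 < r - ((⌊r⌋).toNat : ℝ)) := by
  have hf0 : 0 ≤ ⌊r⌋ := Int.floor_nonneg.mpr h0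
  have hfc : ((⌊r⌋).toNat : ℝ) = ((⌊r⌋ : ℤ) : ℝ) := by
    exact_mod_cast congrArg (fun z : ℤ => (z : ℝ)) (Int.toNat_of_nonneg hf0)
  have hle : ⌊r⌋ ≤ ⌈r⌉ := Int.floor_le_ceil r
  have hcf : ⌈r⌉ ≤ ⌊r⌋ + 1 := Int.ceil_le_floor_add_one r
  refine ⟨by omega, by omega, ?_, ?_, ?_, ?_⟩
  · rw [hfc]; linarith [Int.floor_le r]
  · rw [hfc]; linarith [Int.lt_floor_add_one r]
  · intro h
    have hceq : ⌈r⌉ = ⌊r⌋ := by omega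
    have h1 : r ≤ (⌊r⌋ : ℝ) := by
      have := Int.le_ceil r; rw [hceq] at this; exact_mod_cast this
    have h2 : (⌊r⌋ : ℝ) ≤ r := Int.floor_le r
    rw [hfc]; linarith
  · intro h
    have hne : r ≠ ((⌊r⌋ : ℤ) : ℝ) := by
      intro heq
      have : ⌈r⌉ = ⌊r⌋ := by nth_rewrite 1 [heq]; rw [Int.ceil_intCast]
      omega
    have h2 : (⌊r⌋ : ℝ) ≤ r := Int.floor_le r
    rw [hfc]
    rcases lt_or_eq_of_le h2 with h3 | h3
    · linarith
    · exact absurd h3.symm hne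

lemma cube_fl_ce_frac (lam : Λ.Mor) (hle : Λ.deg lam ≤ 1) (t : Fin k → ℝ)
    (hb : ∀ i, 0 ≤ t i ∧ t i ≤ (Λ.deg lam i : ℝ))
    (hc : ∀ i, Λ.deg lam i = 1 → 0 < t i ∧ t i < 1) :
    fl t = 0 ∧ ce t = Λ.deg lam ∧ frac t = t := by
  have key : ∀ i, (0 ≤ t i ∧ t i < 1) ∧ (Λ.deg lam i = 0 → t i = 0) := by
    intro i
    have h1 : Λ.deg lam i ≤ 1 := hle i
    rcases Nat.le_one_iff_eq_zero_or_eq_one.mp h1 with h | h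
    · have h2 := hb i
      rw [h] at h2
      norm_num at h2
      refine ⟨⟨h2.1, ?_⟩, fun _ => le_antisymm h2.2 h2.1⟩
      have : t i = 0 := le_antisymm h2.2 h2.1
      rw [this]; norm_num
    · exact ⟨⟨(hc i h).1.le, (hc i h).2⟩, fun h0 => by omega⟩
  have hfl : fl t = 0 := by
    funext i
    have := (key i).1
    simp only [fl, Pi.zero_apply]
    rw [Int.floor_eq_zero_iff.mpr (by exact ⟨this.1, this.2⟩)]
    rfl
  refine ⟨hfl, ?_, ?_⟩
  · funext i
    rcases Nat.le_one_iff_eq_zero_or_eq_one.mp (hle i) with h | h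
    · simp [ce, h, (key i).2 h]
    · have h2 := hc i h
      rw [h]
      simp only [ce]
      have : ⌈t i⌉ = 1 := by
        refine le_antisymm (Int.ceil_le.mpr (by push_cast; linarith [h2.2])) ?_
        have : (0:ℤ) < ⌈t i⌉ := Int.lt_ceil.mpr (by push_cast; exact h2.1)
        omega
      rw [this]; rfl
  · funext i
    have h0 : (⌊t i⌋).toNat = 0 := by
      have := congrFun hfl i
      simpa [fl] using this
    simp only [frac]
    rw [h0]
    norm_num

lemma seg_cube (lam : Λ.Mor) (hle : Λ.deg lam ≤ 1) (t : Fin k → ℝ)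
    (hb : ∀ i, 0 ≤ t i ∧ t i ≤ (Λ.deg lam i : ℝ))
    (hc : ∀ i, Λ.deg lam i = 1 → 0 < t i ∧ t i < 1) :
    Λ.seg lam (fl t) (ce t) = lam := by
  obtain ⟨h1, h2, _⟩ := Λ.cube_fl_ce_frac lam hle t hb hc
  rw [h1, h2]
  exact Λ.seg_self lam

lemma exists_cube_rep (a : Λ.Mor) (t : Fin k → ℝ)
    (ht : ∀ i, 0 ≤ t i ∧ t i ≤ (Λ.deg a i : ℝ)) :
    ∃ (b : Λ.Mor) (hb : ∀ i, 0 ≤ frac t i ∧ frac t i ≤ (Λ.deg b i : ℝ)),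
      Λ.deg b ≤ 1 ∧ (∀ i, Λ.deg b i = 1 → 0 < frac t i ∧ frac t i < 1) ∧
      Λ.seg a (fl t) (ce t) = b ∧
      Quotient.mk Λ.ptSetoid ⟨a, ⟨t, ht⟩⟩ = Λ.pt b (frac t) hb := by
  have hcf := fun i => coord_facts (t i) (ht i).1
  -- bounds between fl, ce, deg a
  have hfc : ∀ i, fl t i ≤ ce t i := fun i => (hcf i).1
  have hca : ∀ i, ce t i ≤ Λ.deg a i := by
    intro i
    have h1 : ⌈t i⌉ ≤ (Λ.deg a i : ℤ) := Int.ceil_le.mpr (by exact_mod_cast (ht i).2)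
    simp only [ce]; omega
  -- first factorization at fl t
  have hd1 : Λ.deg a = fl t + (Λ.deg a - fl t) := by
    funext i
    have := hca i; have := hfc i
    simp only [Pi.add_apply, Pi.sub_apply]; omega
  obtain ⟨p, ⟨hp1, hp2, hp3, hp4⟩, -⟩ := Λ.factor a (fl t) (Λ.deg a - fl t) hd1
  -- second factorization of p.2 at ce t - fl t
  have hd2 : Λ.deg p.2 = (ce t - fl t) + (Λ.deg a - ce t) := by
    rw [hp2]; funext i
    have := hca i; have := hfc i
    simp only [Pi.add_apply, Pi.sub_apply]; omega
  obtain ⟨q, ⟨hq1, hq2, hq3, hq4⟩, -⟩ := Λ.factor p.2 (ce t - fl t) (Λ.deg a - ce t) hd2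
  set b := q.1 with hbdef
  have hseg : Λ.seg a (fl t) (ce t) = b := by
    refine Λ.seg_spec a b p.1 q.2 (fl t) (ce t) hq1 hp1 ?_ hq3 ?_
    · rw [hp3, ← hq4, Λ.rng_comp q.1 q.2 hq3]
    · rw [← hp4, hq4]
  -- degree of b
  have hdb : ∀ i, Λ.deg b i = ce t i - fl t i := by
    intro i; rw [hq1]; rfl
  have hble : Λ.deg b ≤ 1 := by
    intro i
    have h1 := (hcf i).2.1; have h2 := hdb i
    simp only [fl, ce] at h1 h2 ⊢
    simp only [Pi.one_apply]; omega
  -- frac bounds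
  have hfr0 : ∀ i, 0 ≤ frac t i := fun i => (hcf i).2.2.1
  have hfr1 : ∀ i, frac t i < 1 := fun i => (hcf i).2.2.2.1
  have hzero : ∀ i, Λ.deg b i = 0 → frac t i = 0 := by
    intro i h
    have h1 := hdb i; have h2 := hfc i
    refine (hcf i).2.2.2.2.1 ?_
    simp only [fl, ce] at h1 h2 ⊢; omega
  have hpos : ∀ i, Λ.deg b i = 1 → 0 < frac t i := by
    intro i h
    have h1 := hdb i
    refine (hcf i).2.2.2.2.2 ?_
    simp only [fl, ce] at h1 ⊢; omega
  have hbb : ∀ i, 0 ≤ frac t i ∧ frac t i ≤ (Λ.deg b i : ℝ) := by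
    intro i
    refine ⟨hfr0 i, ?_⟩
    rcases Nat.le_one_iff_eq_zero_or_eq_one.mp (hble i) with h | h
    · rw [h, hzero i h]; norm_num
    · rw [h]; exact (hfr1 i).le.trans (by norm_num)
  have hcc : ∀ i, Λ.deg b i = 1 → 0 < frac t i ∧ frac t i < 1 :=
    fun i h => ⟨hpos i h, hfr1 i⟩
  refine ⟨b, hbb, hble, hcc, hseg, ?_⟩
  apply Quotient.sound
  constructor
  · rw [hseg, Λ.seg_cube b hble (frac t) hbb hcc]
  · obtain ⟨-, -, h3⟩ := Λ.cube_fl_ce_frac b hble (frac t) hbb hcc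
    exact h3.symm

lemma pt_inj (lam mu : Λ.Mor) (hlam : Λ.deg lam ≤ 1) (hmu : Λ.deg mu ≤ 1)
    (t u : Fin k → ℝ)
    (hbt : ∀ i, 0 ≤ t i ∧ t i ≤ (Λ.deg lam i : ℝ))
    (hbu : ∀ i, 0 ≤ u i ∧ u i ≤ (Λ.deg mu i : ℝ))
    (hct : ∀ i, Λ.deg lam i = 1 → 0 < t i ∧ t i < 1)
    (hcu : ∀ i, Λ.deg mu i = 1 → 0 < u i ∧ u i < 1)
    (h : Λ.pt lam t hbt = Λ.pt mu u hbu) : lam = mu ∧ t = u := by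
  have hrel : Λ.ptRel ⟨lam, ⟨t, hbt⟩⟩ ⟨mu, ⟨u, hbu⟩⟩ := Quotient.exact h
  obtain ⟨h1, h2⟩ := hrel
  rw [Λ.seg_cube lam hlam t hbt hct, Λ.seg_cube mu hmu u hbu hcu] at h1
  obtain ⟨-, -, hft⟩ := Λ.cube_fl_ce_frac lam hlam t hbt hct
  obtain ⟨-, -, hfu⟩ := Λ.cube_fl_ce_frac mu hmu u hbu hcu
  rw [hft, hfu] at h2
  exact ⟨h1, h2⟩

lemma frac_out (p : Λ.Points) :
    frac (Quotient.out (Quotient.mk Λ.ptSetoid p)).2.1 = frac p.2.1 := by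
  have hrel := Quotient.exact (Quotient.out_eq (Quotient.mk Λ.ptSetoid p))
  exact (hrel : Λ.ptRel _ _).2

lemma frac_out_pt (lam : Λ.Mor) (hle : Λ.deg lam ≤ 1) (t : Fin k → ℝ)
    (hb : ∀ i, 0 ≤ t i ∧ t i ≤ (Λ.deg lam i : ℝ))
    (hc : ∀ i, Λ.deg lam i = 1 → 0 < t i ∧ t i < 1) :
    frac (Quotient.out (Λ.pt lam t hb)).2.1 = t := by
  have h1 := Λ.frac_out ⟨lam, ⟨t, hb⟩⟩
  have h2 := (Λ.cube_fl_ce_frac lam hle t hb hc).2.2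
  simp only [pt]
  rw [h1, h2]

lemma pt_congr (a : Λ.Mor) (t u : Fin k → ℝ)
    (hb : ∀ i, 0 ≤ t i ∧ t i ≤ (Λ.deg a i : ℝ))
    (hu : ∀ i, 0 ≤ u i ∧ u i ≤ (Λ.deg a i : ℝ)) (h : t = u) :
    Λ.pt a t hb = Λ.pt a u hu := by subst h; rfl

lemma fraw_continuous (lam : Λ.Mor) (hle : Λ.deg lam ≤ 1) :
    Continuous (fun x : ↥(Λ.Qcube lam) => frac (Quotient.out x.1).2.1) := by
  classical
  rw [continuous_def]
  intro C' hC'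
  -- The saturated predicate on fractional parts.
  let P : (Fin k → ℝ) → Prop := fun c =>
    (∀ i, Λ.deg lam i = 1 → 0 < c i ∧ c i < 1) ∧
      (fun i => if Λ.deg lam i = 1 then c i else 0) ∈ C'
  -- The corresponding set in ℝᵏ is open.
  have hUopen : IsOpen { s : Fin k → ℝ | P (frac s) } := by
    rw [isOpen_iff_forall_mem_open]
    intro s₀ hs₀
    obtain ⟨hsI, hsC⟩ := hs₀
    refine ⟨{ s | ∀ i, Λ.deg lam i = 1 →
        (((⌊s₀ i⌋).toNat : ℝ) < s i ∧ s i < ((⌊s₀ i⌋).toNat : ℝ) + 1) } ∩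
        (fun s : Fin k → ℝ => fun i =>
          if Λ.deg lam i = 1 then s i - ((⌊s₀ i⌋).toNat : ℝ) else 0) ⁻¹' C',
      ?_, ?_, ?_⟩
    · -- subset of the P-set
      rintro s ⟨hs1, hs2⟩
      have hkey : ∀ i, Λ.deg lam i = 1 →
          frac s i = s i - ((⌊s₀ i⌋).toNat : ℝ) := by
        intro i hi
        obtain ⟨ha, hb'⟩ := hs1 i hi
        have hfl : ⌊s i⌋ = ((⌊s₀ i⌋).toNat : ℤ) := by
          rw [Int.floor_eq_iff]
          constructor
          · push_cast; linarith
          · push_cast; linarith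
        simp only [frac]
        rw [hfl, Int.toNat_natCast]
      constructor
      · intro i hi
        obtain ⟨ha, hb'⟩ := hs1 i hi
        rw [hkey i hi]
        constructor <;> linarith
      · have hmask : (fun i => if Λ.deg lam i = 1 then frac s i else 0) =
            (fun i => if Λ.deg lam i = 1 then s i - ((⌊s₀ i⌋).toNat : ℝ) else 0) := by
          funext i
          by_cases hi : Λ.deg lam i = 1
          · simp only [if_pos hi, hkey i hi]
          · simp only [if_neg hi]
        rw [hmask]
        exact hs2
    · -- openness
      apply IsOpen.inter
      · have heq : { s : Fin k → ℝ | ∀ i, Λ.deg lam i = 1 →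
            (((⌊s₀ i⌋).toNat : ℝ) < s i ∧ s i < ((⌊s₀ i⌋).toNat : ℝ) + 1) } =
            ⋂ i, { s : Fin k → ℝ | Λ.deg lam i = 1 →
              (((⌊s₀ i⌋).toNat : ℝ) < s i ∧ s i < ((⌊s₀ i⌋).toNat : ℝ) + 1) } := by
          ext s; simp [Set.mem_iInter]
        rw [heq]
        apply isOpen_iInter_of_finite
        intro i
        by_cases hi : Λ.deg lam i = 1
        · have heq2 : { s : Fin k → ℝ | Λ.deg lam i = 1 →
              (((⌊s₀ i⌋).toNat : ℝ) < s i ∧ s i < ((⌊s₀ i⌋).toNat : ℝ) + 1) } =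
              (fun s : Fin k → ℝ => s i) ⁻¹'
                (Set.Ioo (((⌊s₀ i⌋).toNat : ℝ)) (((⌊s₀ i⌋).toNat : ℝ) + 1)) := by
            ext s; simp [hi, Set.mem_Ioo]
          rw [heq2]
          exact isOpen_Ioo.preimage (continuous_apply i)
        · have heq2 : { s : Fin k → ℝ | Λ.deg lam i = 1 →
              (((⌊s₀ i⌋).toNat : ℝ) < s i ∧ s i < ((⌊s₀ i⌋).toNat : ℝ) + 1) } =
              Set.univ := by
            ext s; simp [hi]
          rw [heq2]
          exact isOpen_univ
      · refine hC'.preimage ?_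
        apply continuous_pi
        intro i
        by_cases hi : Λ.deg lam i = 1
        · simp only [if_pos hi]
          exact (continuous_apply i).sub continuous_const
        · simp only [if_neg hi]
          exact continuous_const
    · -- membership of s₀
      constructor
      · intro i hi
        obtain ⟨h1, h2⟩ := hsI i hi
        simp only [frac] at h1 h2
        constructor <;> linarith
      · have hmask : (fun i => if Λ.deg lam i = 1 then s₀ i - ((⌊s₀ i⌋).toNat : ℝ) else 0) =
            (fun i => if Λ.deg lam i = 1 then frac s₀ i else 0) := by
          funext i
          by_cases hi : Λ.deg lam i = 1
          · simp only [if_pos hi, frac]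
          · simp only [if_neg hi]
        show (fun i => if Λ.deg lam i = 1 then s₀ i - ((⌊s₀ i⌋).toNat : ℝ) else 0) ∈ C'
        rw [hmask]
        exact hsC
  -- The saturated open set in the realization.
  let V : Set Λ.Real := { x | P (frac (Quotient.out x).2.1) }
  have hVopen : IsOpen V := by
    have hpre : (Quotient.mk Λ.ptSetoid) ⁻¹' V = { p : Λ.Points | P (frac p.2.1) } := by
      ext p
      show P (frac (Quotient.out (Quotient.mk Λ.ptSetoid p)).2.1) ↔ P (frac p.2.1)
      rw [Λ.frac_out p]
    have hsat : IsOpen ((Quotient.mk Λ.ptSetoid) ⁻¹' V) := by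
      rw [hpre]
      have : IsOpen { q : Σ a : Λ.Mor,
          { t : Fin k → ℝ // ∀ i, 0 ≤ t i ∧ t i ≤ (Λ.deg a i : ℝ) } |
          P (frac q.2.1) } := by
        rw [isOpen_sigma_iff]
        intro a
        have : (Sigma.mk a ⁻¹' { q : Σ a : Λ.Mor,
            { t : Fin k → ℝ // ∀ i, 0 ≤ t i ∧ t i ≤ (Λ.deg a i : ℝ) } |
            P (frac q.2.1) }) = Subtype.val ⁻¹' { s : Fin k → ℝ | P (frac s) } := by
          ext s; simp
        rw [this]
        exact hUopen.preimage continuous_subtype_val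
      exact this
    exact hsat
  -- conclusion: the preimage of C' equals the trace of V on the cube
  have hpre2 : (fun x : ↥(Λ.Qcube lam) => frac (Quotient.out x.1).2.1) ⁻¹' C' =
      Subtype.val ⁻¹' V := by
    ext x
    obtain ⟨t, hb, hc, hxx⟩ := x.2
    have hfx : frac (Quotient.out x.1).2.1 = t := by
      rw [hxx]; exact Λ.frac_out_pt lam hle t hb hc
    simp only [Set.mem_preimage, Set.mem_setOf_eq, V, hfx]
    have hmask : (fun i => if Λ.deg lam i = 1 then t i else 0) = t := by
      funext i
      by_cases hi : Λ.deg lam i = 1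
      · simp [hi]
      · have h0 : Λ.deg lam i = 0 := by
          have := hle i; simp only [Pi.one_apply] at this; omega
        have := hb i
        rw [h0] at this
        norm_num at this
        simp [hi, le_antisymm this.2 this.1]
    constructor
    · intro hC
      exact ⟨hc, by rw [hmask]; exact hC⟩
    · intro hP
      have := hP.2
      rw [hmask] at this
      exact this
  rw [hpre2]
  exact hVopen.preimage continuous_subtype_val

lemma qcube_homeo (lam : Λ.Mor) (hle : Λ.deg lam ≤ 1) :
    ∃ h : ↥(Λ.Qcube lam) ≃ₜ
        ↥{ t : Fin k → ℝ | (∀ i, 0 ≤ t i ∧ t i ≤ (Λ.deg lam i : ℝ)) ∧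
            (∀ i, Λ.deg lam i = 1 → 0 < t i ∧ t i < 1) },
      ∀ (t : Fin k → ℝ) (hb : ∀ i, 0 ≤ t i ∧ t i ≤ (Λ.deg lam i : ℝ))
        (hc : ∀ i, Λ.deg lam i = 1 → 0 < t i ∧ t i < 1)
        (hm : Λ.pt lam t hb ∈ Λ.Qcube lam),
        (h ⟨Λ.pt lam t hb, hm⟩).1 = t := by
  refine ⟨{
    toFun := fun x => ⟨frac (Quotient.out x.1).2.1, ?_⟩
    invFun := fun t => ⟨Λ.pt lam t.1 t.2.1, t.1, t.2.1, t.2.2, rfl⟩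
    left_inv := ?_
    right_inv := ?_
    continuous_toFun := ?_
    continuous_invFun := ?_ }, ?_⟩
  · obtain ⟨t, hb, hc, hxx⟩ := x.2
    have hfx : frac (Quotient.out x.1).2.1 = t := by
      rw [hxx]; exact Λ.frac_out_pt lam hle t hb hc
    rw [hfx]
    exact ⟨hb, hc⟩
  · intro x
    apply Subtype.ext
    obtain ⟨t, hb, hc, hxx⟩ := x.2
    have hfx : frac (Quotient.out x.1).2.1 = t := by
      rw [hxx]; exact Λ.frac_out_pt lam hle t hb hc
    exact (Λ.pt_congr lam _ t _ hb hfx).trans hxx.symm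
  · intro t
    apply Subtype.ext
    exact Λ.frac_out_pt lam hle t.1 t.2.1 t.2.2
  · exact (Λ.fraw_continuous lam hle).subtype_mk _
  · apply Continuous.subtype_mk
    exact (continuous_quotient_mk').comp
      (continuous_sigmaMk.comp (continuous_subtype_val.subtype_mk _))
  · intro t hb hc hm
    exact Λ.frac_out_pt lam hle t hb hc

lemma cube_fin_homeo (lam : Λ.Mor) (hle : Λ.deg lam ≤ 1) :
    Nonempty (↥{ t : Fin k → ℝ | (∀ i, 0 ≤ t i ∧ t i ≤ (Λ.deg lam i : ℝ)) ∧
        (∀ i, Λ.deg lam i = 1 → 0 < t i ∧ t i < 1) } ≃ₜ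
      ↥{ u : Fin (∑ i, Λ.deg lam i) → ℝ | ∀ j, 0 < u j ∧ u j < 1 }) := by
  classical
  have hcard : Fintype.card {i : Fin k // Λ.deg lam i = 1} = ∑ i, Λ.deg lam i := by
    rw [Fintype.card_subtype, Finset.card_filter]
    apply Finset.sum_congr rfl
    intro i _
    rcases Nat.le_one_iff_eq_zero_or_eq_one.mp (hle i) with h | h <;> simp [h]
  let e : Fin (∑ i, Λ.deg lam i) ≃ {i : Fin k // Λ.deg lam i = 1} :=
    (finCongr hcard).symm.trans (Fintype.equivFin _).symm
  refine ⟨{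
    toFun := fun t => ⟨fun j => t.1 (e j).1, fun j => t.2.2 (e j).1 (e j).2⟩
    invFun := fun u => ⟨fun i => if h : Λ.deg lam i = 1 then u.1 (e.symm ⟨i, h⟩) else 0,
      ?_, ?_⟩
    left_inv := ?_
    right_inv := ?_
    continuous_toFun := ?_
    continuous_invFun := ?_ }⟩
  · intro i
    by_cases hi : Λ.deg lam i = 1
    · simp only [dif_pos hi, hi]
      have := u.2 (e.symm ⟨i, hi⟩)
      exact ⟨this.1.le, by push_cast; linarith [this.2]⟩
    · simp only [dif_neg hi]
      have h0 : Λ.deg lam i = 0 := by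
        have := hle i; simp only [Pi.one_apply] at this; omega
      rw [h0]
      norm_num
  · intro i hi
    simp only [dif_pos hi]
    exact u.2 (e.symm ⟨i, hi⟩)
  · intro t
    apply Subtype.ext
    funext i
    by_cases hi : Λ.deg lam i = 1
    · simp only [dif_pos hi]
      have : e (e.symm ⟨i, hi⟩) = ⟨i, hi⟩ := Equiv.apply_symm_apply e _
      rw [this]
    · simp only [dif_neg hi]
      have h0 : Λ.deg lam i = 0 := by
        have := hle i; simp only [Pi.one_apply] at this; omega
      have := t.2.1 i
      rw [h0] at this
      norm_num at this
      exact (le_antisymm this.2 this.1).symm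
  · intro u
    apply Subtype.ext
    funext j
    simp only [dif_pos (e j).2]
    have : (⟨(e j).1, (e j).2⟩ : {i : Fin k // Λ.deg lam i = 1}) = e j := rfl
    rw [this, Equiv.symm_apply_apply]
  · apply Continuous.subtype_mk
    apply continuous_pi
    intro j
    exact (continuous_apply ((e j).1)).comp continuous_subtype_val
  · apply Continuous.subtype_mk
    apply continuous_pi
    intro i
    by_cases hi : Λ.deg lam i = 1
    · simp only [dif_pos hi]
      exact (continuous_apply (e.symm ⟨i, hi⟩)).comp continuous_subtype_val
    · simp only [dif_neg hi]
      exact continuous_const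

end KGraph
end Helpers

/-- `X_Λ` is the union of the open cubes `Q_λ` over `λ` with
`d(λ) ≤ 1_k`; these cubes are pairwise disjoint; and for each such `λ` the map
`[λ,t] ↦ t` is a homeomorphism of `Q_λ` onto the relatively open cube
`(0, d(λ)) ⊆ ℝᵏ` — in particular `Q_λ` is homeomorphic to the open unit cube in
`ℝ^{|d(λ)|}`. -/
theorem open_cubes_partition_and_homeo (k : ℕ) (Λ : KGraph k) :
    (⋃ lam ∈ { lam : Λ.Mor | Λ.deg lam ≤ 1 }, Λ.Qcube lam) = Set.univ ∧
    ({ lam : Λ.Mor | Λ.deg lam ≤ 1 }.PairwiseDisjoint Λ.Qcube) ∧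
    (∀ lam : Λ.Mor, Λ.deg lam ≤ 1 →
      (∃ h : ↥(Λ.Qcube lam) ≃ₜ
          ↥{ t : Fin k → ℝ | (∀ i, 0 ≤ t i ∧ t i ≤ (Λ.deg lam i : ℝ)) ∧
              (∀ i, Λ.deg lam i = 1 → 0 < t i ∧ t i < 1) },
        ∀ (t : Fin k → ℝ) (hb : ∀ i, 0 ≤ t i ∧ t i ≤ (Λ.deg lam i : ℝ))
          (hc : ∀ i, Λ.deg lam i = 1 → 0 < t i ∧ t i < 1)
          (hm : Λ.pt lam t hb ∈ Λ.Qcube lam),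
          (h ⟨Λ.pt lam t hb, hm⟩).1 = t) ∧
      Nonempty (↥(Λ.Qcube lam) ≃ₜ
        ↥{ t : Fin (∑ i, Λ.deg lam i) → ℝ | ∀ i, 0 < t i ∧ t i < 1 })) := by
  refine ⟨?_, ?_, ?_⟩
  · rw [Set.eq_univ_iff_forall]
    intro x
    induction x using Quotient.ind with
    | _ p =>
      obtain ⟨b, hb, hble, hcc, hseg, heq⟩ := Λ.exists_cube_rep p.1 p.2.1 p.2.2
      refine Set.mem_iUnion₂.mpr ⟨b, hble, ?_⟩
      exact ⟨KGraph.frac p.2.1, hb, hcc, heq⟩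
  · intro lam hlam mu hmu hne
    simp only [Function.onFun]
    rw [Set.disjoint_left]
    intro x hx hx'
    obtain ⟨t, hb, hc, rfl⟩ := hx
    obtain ⟨u, hb', hc', heq⟩ := hx'
    exact hne (Λ.pt_inj lam mu hlam hmu t u hb hb' hc hc' heq).1
  · intro lam hle
    obtain ⟨h, hspec⟩ := Λ.qcube_homeo lam hle
    obtain ⟨h2⟩ := Λ.cube_fin_homeo lam hle
    exact ⟨⟨h, hspec⟩, ⟨h.trans h2⟩⟩
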